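/- Let (X, S) be a stratified complex variety with irreducible strata, and i : Y → X a closed embedding with an induced stratification T of Y such that S ↦ S ∩ Y is a bijection S → T and each i|_{S̄∩Y} : S̄ ∩ Y → S̄ is a normally nonsingular inclusion of fixed codimension c. Assume the simple S-constructible perverse sheaves are the IC_S (all strata simply connected). Then the functor [-c] i* : D^b(X, S) → D^b(Y, T) is t-exact for the perverse t-structures. -/

import Mathlib

/-!
STATEMENT 19: Let `(X, S)` be a stratified complex variety with irreducible
(simply connected) strata and `i : Y → X` a closed embedding inducing a
stratification `T` of `Y`, bijectively on strata, which is normally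
nonsingular of fixed codimension `c` along each stratum closure.  Then
`[-c] i* : D^b(X, S) → D^b(Y, T)` is t-exact for the perverse t-structures.

Since constructible sheaves and perverse t-structures are not available in
Mathlib, the situation is formalized at the triangulated level, which is how
the proof proceeds: `D₁ = D^b(X,S)` and `D₂ = D^b(Y,T)` are triangulated
categories equipped with t-structures `t₁, t₂` (the perverse t-structures);
`F = [-c] i*` is a triangulated functor; the hypotheses state that the
t-structure `t₁` is bounded, that the simple objects of the heart of `t₁` are
the intersection cohomology complexes `IC_S` (every object of the artinian
heart `Perv(X,S)` is a finite iterated extension of the `IC_S`, `S ∈ S`), and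
that the normally nonsingular inclusions induce isomorphisms
`F(IC_S) = [-c]i*(IC_S) ≅ IC_{S∩Y}` with the `IC_{S∩Y}` in the heart of `t₂`.
The conclusion is the t-exactness of `F`.
-/

open CategoryTheory Limits Pretriangulated Triangulated

/-- Finite iterated extensions (in the heart) of a set of objects:
zero objects, objects of the set, closure under isomorphism and under
extensions given by distinguished triangles. -/
inductive IterExt {D : Type*} [Category D] [HasZeroObject D] [HasShift D ℤ]
    [Preadditive D] [∀ n : ℤ, (shiftFunctor D n).Additive] [Pretriangulated D]
    (S : Set D) : D → Prop
  | zero (X : D) (hX : IsZero X) : IterExt S X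
  | of (X : D) (hX : X ∈ S) : IterExt S X
  | isoClosed (X Y : D) (e : X ≅ Y) (hX : IterExt S X) : IterExt S Y
  | ext (T : Triangle D) (hT : T ∈ distTriang D)
      (h₁ : IterExt S T.obj₁) (h₃ : IterExt S T.obj₃) : IterExt S T.obj₂

section Aux

variable {D : Type*} [Category D] [HasZeroObject D] [HasShift D ℤ]
    [Preadditive D] [∀ n : ℤ, (shiftFunctor D n).Additive] [Pretriangulated D]
    (t : TStructure D)

lemma aux_zero_of {A B : D} (f : A ⟶ B) (n : ℤ) (hA : t.le n A) (hB : t.ge (n + 1) B) :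
    f = 0 := by
  have hA' : t.le 0 (A⟦n⟧) := t.le_shift n n 0 (by omega) A hA
  have hB' : t.ge 1 (B⟦n⟧) := t.ge_shift (n + 1) n 1 (by omega) B hB
  have := t.zero' ((shiftFunctor D n).map f) hA' hB'
  rwa [Functor.map_eq_zero_iff] at this

lemma aux_LE_of_orth {A : D} (n : ℤ)
    (h : ∀ B : D, t.ge (n + 1) B → ∀ f : A ⟶ B, f = 0) : t.le n A := by
  obtain ⟨X, Y, hX, hY, f, g, m, hT⟩ := t.exists_triangle A n (n + 1) rfl
  have hg : g = 0 := h Y hY g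
  obtain ⟨φ, hφ⟩ := Triangle.yoneda_exact₃ _ hT (𝟙 Y) (by rw [Triangle.mk_mor₂, hg]; exact zero_comp)
  have hφ0 : φ = 0 := by
    refine aux_zero_of t φ n ?_ hY
    exact (t.le_monotone (show n - 1 ≤ n by omega)) _ (t.le_shift n 1 (n - 1) (by omega) X hX)
  have hYzero : IsZero Y := by
    rw [IsZero.iff_id_eq_zero, hφ, hφ0, comp_zero]
    rfl
  have : IsIso f := (Triangle.isZero₃_iff_isIso₁ _ hT).1 hYzero
  exact ((t.le n).prop_iff_of_iso (asIso f)).1 hX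

lemma aux_GE_of_orth {B : D} (n : ℤ)
    (h : ∀ A : D, t.le (n - 1) A → ∀ f : A ⟶ B, f = 0) : t.ge n B := by
  obtain ⟨X, Y, hX, hY, f, g, m, hT⟩ := t.exists_triangle B (n - 1) n (by omega)
  have hf : f = 0 := h X hX f
  obtain ⟨φ, hφ⟩ := Triangle.coyoneda_exact₂ _ (inv_rot_of_distTriang _ hT) (𝟙 X)
    (by simp [hf]; exact comp_zero)
  have hφ0 : φ = 0 := by
    refine aux_zero_of t φ (n - 1) hX ?_
    exact (t.ge_antitone (show n - 1 + 1 ≤ n + 1 by omega)) _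
      (t.ge_shift n (-1) (n + 1) (by omega) Y hY)
  have hXzero : IsZero X := by
    rw [IsZero.iff_id_eq_zero, hφ, hφ0, zero_comp]
    rfl
  have : IsIso g := (Triangle.isZero₁_iff_isIso₂ _ hT).1 hXzero
  exact ((t.ge n).prop_iff_of_iso (asIso g)).2 hY

lemma aux_LE_ext (T : Triangle D) (hT : T ∈ distTriang D) (n : ℤ)
    (h₁ : t.le n T.obj₁) (h₃ : t.le n T.obj₃) : t.le n T.obj₂ := by
  refine aux_LE_of_orth t n (fun B hB f => ?_)
  obtain ⟨g, rfl⟩ := Triangle.yoneda_exact₂ _ hT f (aux_zero_of t _ n h₁ hB)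
  rw [aux_zero_of t g n h₃ hB, comp_zero]

lemma aux_GE_ext (T : Triangle D) (hT : T ∈ distTriang D) (n : ℤ)
    (h₁ : t.ge n T.obj₁) (h₃ : t.ge n T.obj₃) : t.ge n T.obj₂ := by
  refine aux_GE_of_orth t n (fun A hA f => ?_)
  obtain ⟨g, rfl⟩ := Triangle.coyoneda_exact₂ _ hT f
    (aux_zero_of t _ (n - 1) hA ((t.ge_antitone (by omega)) _ h₃))
  rw [aux_zero_of t g (n - 1) hA ((t.ge_antitone (by omega)) _ h₁), zero_comp]

lemma aux_LE_of_isZero {A : D} (hA : IsZero A) (n : ℤ) : t.le n A :=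
  aux_LE_of_orth t n (fun _ _ f => hA.eq_of_src f 0)

lemma aux_GE_of_isZero {A : D} (hA : IsZero A) (n : ℤ) : t.ge n A :=
  aux_GE_of_orth t n (fun _ _ f => hA.eq_of_tgt f 0)

end Aux


theorem statement19 {D₁ D₂ : Type*} [Category D₁] [Category D₂]
    [HasZeroObject D₁] [HasShift D₁ ℤ] [Preadditive D₁]
    [∀ n : ℤ, (shiftFunctor D₁ n).Additive] [Pretriangulated D₁]
    [HasZeroObject D₂] [HasShift D₂ ℤ] [Preadditive D₂]
    [∀ n : ℤ, (shiftFunctor D₂ n).Additive] [Pretriangulated D₂]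
    -- the perverse t-structures on `D^b(X,S)` and `D^b(Y,T)`:
    (t₁ : TStructure D₁) (t₂ : TStructure D₂)
    -- the triangulated functor `F = [-c] i*`:
    (F : D₁ ⥤ D₂) [F.CommShift ℤ] [F.IsTriangulated]
    -- the (finitely many) strata and intersection cohomology complexes:
    {σ : Type} [Finite σ] (IC : σ → D₁) (ICY : σ → D₂)
    -- each `IC_S` lies in the heart `Perv(X, S)`:
    (hIC : ∀ s, t₁.le 0 (IC s) ∧ t₁.ge 0 (IC s))
    -- the `IC_S` are the simple objects of the artinian heart: every object of
    -- the heart is a finite iterated extension of the `IC_S`: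
    (hheart : ∀ X : D₁, t₁.le 0 X → t₁.ge 0 X → IterExt (Set.range IC) X)
    -- the t-structure is bounded:
    (hbound : ∀ X : D₁, ∃ a b : ℤ, t₁.ge a X ∧ t₁.le b X)
    -- normal nonsingularity: `[-c]i*(IC_S) ≅ IC_{S∩Y}`, an object of the heart
    -- `Perv(Y, T)`:
    (hICY : ∀ s, t₂.le 0 (ICY s) ∧ t₂.ge 0 (ICY s))
    (hnn : ∀ s, Nonempty (F.obj (IC s) ≅ ICY s)) :
    -- conclusion: `F = [-c] i*` is t-exact:
    ∀ X : D₁, (t₁.le 0 X → t₂.le 0 (F.obj X)) ∧ (t₁.ge 0 X → t₂.ge 0 (F.obj X)) := by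
  -- Step 1: `F` sends the heart of `t₁` into the heart of `t₂`.
  have heart : ∀ X : D₁, t₁.le 0 X → t₁.ge 0 X →
      t₂.le 0 (F.obj X) ∧ t₂.ge 0 (F.obj X) := by
    intro X h1 h2
    have hh := hheart X h1 h2
    clear h1 h2
    induction hh with
    | zero X hX =>
        have hZ : IsZero (F.obj X) := F.map_isZero hX
        exact ⟨aux_LE_of_isZero t₂ hZ 0, aux_GE_of_isZero t₂ hZ 0⟩
    | of X hX =>
        obtain ⟨s, rfl⟩ := hX
        have e := (hnn s).some
        exact ⟨((t₂.le 0).prop_iff_of_iso e).2 (hICY s).1,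
          ((t₂.ge 0).prop_iff_of_iso e).2 (hICY s).2⟩
    | isoClosed X Y e hX ih =>
        exact ⟨((t₂.le 0).prop_iff_of_iso (F.mapIso e)).1 ih.1,
          ((t₂.ge 0).prop_iff_of_iso (F.mapIso e)).1 ih.2⟩
    | ext T hT h₁ h₃ ih₁ ih₃ =>
        have hT' := F.map_distinguished T hT
        exact ⟨aux_LE_ext t₂ _ hT' 0 ih₁.1 ih₃.1,
          aux_GE_ext t₂ _ hT' 0 ih₁.2 ih₃.2⟩
  -- Step 2: by induction on the "width" of `X`, `F` is exact on all of `D₁`.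
  have key : ∀ (k : ℕ) (X : D₁) (a b : ℤ), b - a ≤ (k : ℤ) → t₁.ge a X → t₁.le b X →
      t₂.ge a (F.obj X) ∧ t₂.le b (F.obj X) := by
    intro k
    induction k with
    | zero =>
        intro X a b hk hGE hLE
        rcases lt_or_ge b a with hba | hab
        · -- degenerate: `X` is zero
          have : 𝟙 X = 0 := aux_zero_of t₁ (𝟙 X) b hLE
            ((t₁.ge_antitone (show b + 1 ≤ a by omega)) _ hGE)
          have hZ : IsZero X := by rw [IsZero.iff_id_eq_zero]; exact this
          have hZ' : IsZero (F.obj X) := F.map_isZero hZ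
          exact ⟨aux_GE_of_isZero t₂ hZ' a, aux_LE_of_isZero t₂ hZ' b⟩
        · -- `a = b`: shift into the heart
          have hab' : a = b := by omega
          subst hab'
          have h1 : t₁.le 0 (X⟦a⟧) := t₁.le_shift a a 0 (by omega) X hLE
          have h2 : t₁.ge 0 (X⟦a⟧) := t₁.ge_shift a a 0 (by omega) X hGE
          obtain ⟨hL, hG⟩ := heart _ h1 h2
          have e : F.obj (X⟦a⟧) ≅ (F.obj X)⟦a⟧ := (F.commShiftIso a).app X
          have hL' : t₂.le 0 ((F.obj X)⟦a⟧) := ((t₂.le 0).prop_iff_of_iso e).1 hL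
          have hG' : t₂.ge 0 ((F.obj X)⟦a⟧) := ((t₂.ge 0).prop_iff_of_iso e).1 hG
          constructor
          · rw [← t₂.shift_ge a 0 a (by omega)]; exact hG'
          · rw [← t₂.shift_le a 0 a (by omega)]; exact hL'
    | succ k ih =>
        intro X a b hk hGE hLE
        rcases le_or_gt b a with hab | hab
        · exact ih X a b (by omega) hGE hLE
        · -- truncation triangle
          obtain ⟨X', Y', hX', hY', f, g, m, hT⟩ := t₁.exists_triangle X a (a + 1) rfl
          -- `X'` is in `GE a`
          have hX'GE : t₁.ge a X' := by
            refine aux_GE_ext t₁ _ (inv_rot_of_distTriang _ hT) a ?_ hGE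
            exact (t₁.ge_antitone (show a ≤ a + 2 by omega)) _
              (t₁.ge_shift (a + 1) (-1) (a + 2) (by omega) Y' hY')
          -- `Y'` is in `LE b`
          have hY'LE : t₁.le b Y' := by
            refine aux_LE_ext t₁ _ (rot_of_distTriang _ hT) b hLE ?_
            exact (t₁.le_monotone (show a - 1 ≤ b by omega)) _
              (t₁.le_shift a 1 (a - 1) (by omega) X' hX')
          have r₁ := ih X' a a (by omega) hX'GE hX'
          have r₂ := ih Y' (a + 1) b (by omega) hY' hY'LE
          have hT' := F.map_distinguished _ hT
          constructor
          · exact aux_GE_ext t₂ _ hT' a r₁.1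
              ((t₂.ge_antitone (show a ≤ a + 1 by omega)) _ r₂.1)
          · exact aux_LE_ext t₂ _ hT' b
              ((t₂.le_monotone (show a ≤ b by omega)) _ r₁.2) r₂.2
  -- Conclusion
  intro X
  obtain ⟨a, b, hGa, hLb⟩ := hbound X
  constructor
  · intro hL0
    exact (key (0 - a).toNat X a 0 (Int.self_le_toNat _) hGa hL0).2
  · intro hG0
    exact (key b.toNat X 0 b (by simpa using Int.self_le_toNat b) hG0 hLb).1
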